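/- Given a three-valued interpretation ⟨D,v⟩ over {0, 1/2, 1}, define the Clemens interpretation ⟨D,v'⟩ over 2^n by mapping 1 ↦ ⟨1,…,1,1⟩, 1/2 ↦ ⟨1,…,1,0⟩, and 0 ↦ ⟨0,…,0,0⟩. Then for every sentence A: (a) the Clemens value of A is ⟨1,…,1⟩ iff the three-valued value is 1, and (b) the Clemens value of A is ⟨0,…,0⟩ iff the three-valued value is 0. -/

import Mathlib

/-- Helper instance so that instance search for the lexicographic order does not get stuck. -/
instance (n : ℕ) : WellFoundedLT (Fin n) := inferInstance

/-- `2^n`: the `n`-fold product of the two-element Boolean algebra `2 = {0,1}` (as `Bool`,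
with `false = 0`, `true = 1`), carrying the lexicographic order. -/
abbrev Tup (n : ℕ) := Lex (Fin n → Bool)

/-- The componentwise complement `-⟨x₁,…,xₙ⟩ = ⟨1-x₁,…,1-xₙ⟩` on `2^n`. -/
def tneg {n : ℕ} (x : Tup n) : Tup n := toLex fun i => !(ofLex x i)

/-- The top value `⟨1,…,1⟩` of `2^n`. -/
def tTop (n : ℕ) : Tup n := toLex fun _ => true

/-- The bottom value `⟨0,…,0⟩` of `2^n`. -/
def tBot (n : ℕ) : Tup n := toLex fun _ => false

/-- The three truth values `f < i < t` (i.e. `0 < 1/2 < 1`). -/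
inductive V3 where
  | f | i | t
deriving DecidableEq

instance : Fintype V3 :=
  Fintype.ofList [V3.f, V3.i, V3.t] (fun x => by cases x <;> decide)

def V3.toFin : V3 → Fin 3
  | .f => 0 | .i => 1 | .t => 2

instance : LinearOrder V3 := LinearOrder.lift' V3.toFin (by decide)

/-- Three-valued negation: `1 - x`. -/
def V3.negv : V3 → V3
  | .t => .f | .i => .i | .f => .t

/-- The map `g : {0,1/2,1} → 2^n` sending `1 ↦ ⟨1,…,1,1⟩`, `1/2 ↦ ⟨1,…,1,0⟩`,
`0 ↦ ⟨0,…,0,0⟩`. -/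
def gmap (n : ℕ) : V3 → Tup n
  | .t => tTop n
  | .i => toLex fun i => decide ((i : ℕ) < n - 1)
  | .f => tBot n

instance (n : ℕ) : Fintype (Tup n) := Fintype.ofEquiv _ toLex
instance (n : ℕ) : Nonempty (Tup n) := ⟨tBot n⟩
noncomputable instance (n : ℕ) : CompleteLinearOrder (Tup n) :=
  Fintype.toCompleteLinearOrder _
instance : Nonempty V3 := ⟨V3.t⟩
noncomputable instance : CompleteLinearOrder V3 :=
  Fintype.toCompleteLinearOrderOfNonempty _

/-- Terms of a first-order language: variables and constant symbols. -/
inductive Term (Const : Type) where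
  | var : ℕ → Term Const
  | const : Const → Term Const

/-- First-order formulas over predicate symbols `Pred` (with arities `ar`),
constants `Const`, and the connectives `¬, ∧, ∨, ∀, ∃`. -/
inductive FForm (Pred Const : Type) (ar : Pred → ℕ) where
  | atom : (P : Pred) → (Fin (ar P) → Term Const) → FForm Pred Const ar
  | neg : FForm Pred Const ar → FForm Pred Const ar
  | conj : FForm Pred Const ar → FForm Pred Const ar → FForm Pred Const ar
  | disj : FForm Pred Const ar → FForm Pred Const ar → FForm Pred Const ar
  | all : ℕ → FForm Pred Const ar → FForm Pred Const ar
  | ex : ℕ → FForm Pred Const ar → FForm Pred Const ar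

/-- Evaluation of terms, given interpretations of the constants and an assignment. -/
def Term.evalt {Const D : Type} (cv : Const → D) (σ : ℕ → D) : Term Const → D
  | .var x => σ x
  | .const c => cv c

/-- The Clemens valuation over `2^n`: componentwise complement for `¬`, lexicographic
min/max for `∧`/`∨`, and inf/sup over the domain for the quantifiers. -/
noncomputable def fevalT {Pred Const : Type} {ar : Pred → ℕ} {n : ℕ} {D : Type}
    (cv : Const → D) (pv : (P : Pred) → (Fin (ar P) → D) → Tup n) (σ : ℕ → D) :
    FForm Pred Const ar → Tup n
  | .atom P ts => pv P fun j => (ts j).evalt cv σ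
  | .neg A => tneg (fevalT cv pv σ A)
  | .conj A B => min (fevalT cv pv σ A) (fevalT cv pv σ B)
  | .disj A B => max (fevalT cv pv σ A) (fevalT cv pv σ B)
  | .all x A => ⨅ d : D, fevalT cv pv (Function.update σ x d) A
  | .ex x A => ⨆ d : D, fevalT cv pv (Function.update σ x d) A

/-- The three-valued (strong Kleene / LP) valuation over `{0, 1/2, 1}`: `1 - x` for `¬`,
min/max for `∧`/`∨`, and inf/sup over the domain for the quantifiers. -/
noncomputable def feval3 {Pred Const : Type} {ar : Pred → ℕ} {D : Type}
    (cv : Const → D) (pv : (P : Pred) → (Fin (ar P) → D) → V3) (σ : ℕ → D) :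
    FForm Pred Const ar → V3
  | .atom P ts => pv P fun j => (ts j).evalt cv σ
  | .neg A => (feval3 cv pv σ A).negv
  | .conj A B => min (feval3 cv pv σ A) (feval3 cv pv σ B)
  | .disj A B => max (feval3 cv pv σ A) (feval3 cv pv σ B)
  | .all x A => ⨅ d : D, feval3 cv pv (Function.update σ x d) A
  | .ex x A => ⨆ d : D, feval3 cv pv (Function.update σ x d) A

/-! Auxiliary lemmas -/

lemma le_tTop {n : ℕ} (x : Tup n) : x ≤ tTop n :=
  Pi.toLex_monotone (fun i => Bool.le_true _)

lemma tBot_le {n : ℕ} (x : Tup n) : tBot n ≤ x :=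
  Pi.toLex_monotone (fun i => Bool.false_le _)

lemma top_eq_tTop {n : ℕ} : (⊤ : Tup n) = tTop n :=
  le_antisymm le_top (le_tTop _)

lemma bot_eq_tBot {n : ℕ} : (⊥ : Tup n) = tBot n :=
  le_antisymm bot_le (tBot_le _)

lemma v3_le_t (a : V3) : a ≤ V3.t := by cases a <;> decide

lemma f_le_v3 (a : V3) : V3.f ≤ a := by cases a <;> decide

lemma top_eq_t : (⊤ : V3) = V3.t := le_antisymm (v3_le_t _) le_top

lemma bot_eq_f : (⊥ : V3) = V3.f := le_antisymm bot_le (f_le_v3 _)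

lemma tneg_eq_tTop {n : ℕ} (x : Tup n) : tneg x = tTop n ↔ x = tBot n := by
  constructor <;> intro h
  · funext i
    have h2 : (!(ofLex x i)) = true := congrFun h i
    show ofLex x i = false
    simpa using h2
  · subst h; rfl

lemma tneg_eq_tBot {n : ℕ} (x : Tup n) : tneg x = tBot n ↔ x = tTop n := by
  constructor <;> intro h
  · funext i
    have h2 : (!(ofLex x i)) = false := congrFun h i
    show ofLex x i = true
    simpa using h2
  · subst h; rfl

/-- In a finite complete linear order, an indexed infimum over a nonempty type
equals `⊥` iff some value is `⊥`. -/
lemma iInf_eq_bot_iff_fin {α ι : Type*} [Nonempty ι] [Fintype α]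
    [CompleteLinearOrder α] (f : ι → α) : (⨅ i, f i) = ⊥ ↔ ∃ i, f i = ⊥ := by
  constructor
  · intro h
    have hmem : sInf (Set.range f) ∈ Set.range f :=
      Set.Nonempty.csInf_mem (Set.range_nonempty f) (Set.Finite.subset Set.finite_univ (Set.subset_univ _))
    obtain ⟨i, hi⟩ := hmem
    exact ⟨i, by rw [hi]; exact h⟩
  · rintro ⟨i, hi⟩
    exact le_antisymm (hi ▸ iInf_le f i) bot_le

lemma iSup_eq_top_iff_fin {α ι : Type*} [Nonempty ι] [Fintype α]
    [CompleteLinearOrder α] (f : ι → α) : (⨆ i, f i) = ⊤ ↔ ∃ i, f i = ⊤ := by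
  constructor
  · intro h
    have hmem : sSup (Set.range f) ∈ Set.range f :=
      Set.Nonempty.csSup_mem (Set.range_nonempty f) (Set.Finite.subset Set.finite_univ (Set.subset_univ _))
    obtain ⟨i, hi⟩ := hmem
    exact ⟨i, by rw [hi]; exact h⟩
  · rintro ⟨i, hi⟩
    exact le_antisymm le_top (hi ▸ le_iSup f i)

lemma iInf_eq_bot_iff_tup {n : ℕ} {ι : Type*} [Nonempty ι] (f : ι → Tup n) :
    (⨅ i, f i) = (⊥ : Tup n) ↔ ∃ i, f i = ⊥ := by
  constructor
  · intro h
    obtain ⟨y, ⟨i, rfl⟩, hy⟩ :=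
      Set.exists_min_image (Set.range f) id (Set.toFinite _) (Set.range_nonempty f)
    exact ⟨i, le_bot_iff.mp (by rw [← h]; exact le_iInf fun j => hy _ ⟨j, rfl⟩)⟩
  · rintro ⟨i, hi⟩
    exact le_antisymm (hi ▸ iInf_le f i) bot_le

lemma iSup_eq_top_iff_tup {n : ℕ} {ι : Type*} [Nonempty ι] (f : ι → Tup n) :
    (⨆ i, f i) = (⊤ : Tup n) ↔ ∃ i, f i = ⊤ := by
  constructor
  · intro h
    obtain ⟨y, ⟨i, rfl⟩, hy⟩ :=
      Set.exists_max_image (Set.range f) id (Set.toFinite _) (Set.range_nonempty f)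
    exact ⟨i, top_le_iff.mp (by rw [← h]; exact iSup_le fun j => hy _ ⟨j, rfl⟩)⟩
  · rintro ⟨i, hi⟩
    exact le_antisymm le_top (hi ▸ le_iSup f i)

/-- Lemma `3toc`: expanding a three-valued interpretation to a Clemens one
via `1 ↦ ⟨1,…,1,1⟩`, `1/2 ↦ ⟨1,…,1,0⟩`, `0 ↦ ⟨0,…,0,0⟩` preserves the extreme values: for
every formula `A` (in particular every sentence) and assignment, (a) the Clemens value is
`⟨1,…,1⟩` iff the three-valued value is `1`, and (b) it is `⟨0,…,0⟩` iff the three-valued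
value is `0`. -/
theorem threeValued_to_clemens (n : ℕ) (hn : 2 ≤ n) (Pred Const : Type) (ar : Pred → ℕ)
    (D : Type) [Nonempty D] (cv : Const → D)
    (pv : (P : Pred) → (Fin (ar P) → D) → V3)
    (A : FForm Pred Const ar) (σ : ℕ → D) :
    (fevalT cv (fun P as => gmap n (pv P as)) σ A = tTop n ↔
       feval3 cv pv σ A = V3.t) ∧
    (fevalT cv (fun P as => gmap n (pv P as)) σ A = tBot n ↔
       feval3 cv pv σ A = V3.f) := by
  induction A generalizing σ with
  | atom P ts =>
    simp only [fevalT, feval3]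
    have hft : tBot n ≠ tTop n := fun h =>
      absurd (congrFun h ⟨0, by omega⟩) (by simp [tBot, tTop])
    have hit : gmap n V3.i ≠ tTop n := fun h => by
      have := congrFun h ⟨n - 1, by omega⟩
      simp [gmap, tTop] at this
    have hib : gmap n V3.i ≠ tBot n := fun h => by
      have := congrFun h ⟨0, by omega⟩
      simp [gmap, tBot] at this
      omega
    cases hv : pv P fun j => (ts j).evalt cv σ
    · exact ⟨⟨fun h => absurd h hft, fun h => absurd h (by decide)⟩,
             ⟨fun _ => rfl, fun _ => rfl⟩⟩
    · exact ⟨⟨fun h => absurd h hit, fun h => absurd h (by decide)⟩,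
             ⟨fun h => absurd h hib, fun h => absurd h (by decide)⟩⟩
    · exact ⟨⟨fun _ => rfl, fun _ => rfl⟩,
             ⟨fun h => absurd h.symm hft, fun h => absurd h (by decide)⟩⟩
  | neg A ih =>
    obtain ⟨ih1, ih2⟩ := ih σ
    constructor <;> simp only [fevalT, feval3]
    · rw [tneg_eq_tTop, ih2]
      cases feval3 cv pv σ A <;> simp [V3.negv]
    · rw [tneg_eq_tBot, ih1]
      cases feval3 cv pv σ A <;> simp [V3.negv]
  | conj A B ihA ihB =>
    obtain ⟨ihA1, ihA2⟩ := ihA σ; obtain ⟨ihB1, ihB2⟩ := ihB σ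
    constructor <;> simp only [fevalT, feval3]
    · rw [← top_eq_tTop, ← top_eq_t, min_eq_top, min_eq_top,
        top_eq_tTop, top_eq_t, ihA1, ihB1]
    · rw [← bot_eq_tBot, ← bot_eq_f, min_eq_bot, min_eq_bot,
        bot_eq_tBot, bot_eq_f, ihA2, ihB2]
  | disj A B ihA ihB =>
    obtain ⟨ihA1, ihA2⟩ := ihA σ; obtain ⟨ihB1, ihB2⟩ := ihB σ
    constructor <;> simp only [fevalT, feval3]
    · rw [← top_eq_tTop, ← top_eq_t, max_eq_top, max_eq_top,
        top_eq_tTop, top_eq_t, ihA1, ihB1]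
    · rw [← bot_eq_tBot, ← bot_eq_f, max_eq_bot, max_eq_bot,
        bot_eq_tBot, bot_eq_f, ihA2, ihB2]
  | all x A ih =>
    constructor <;> simp only [fevalT, feval3]
    · rw [← top_eq_tTop, ← top_eq_t, iInf_eq_top, iInf_eq_top]
      exact forall_congr' fun d => by
        rw [top_eq_tTop, top_eq_t]; exact (ih _).1
    · rw [← bot_eq_tBot, ← bot_eq_f, iInf_eq_bot_iff_fin, iInf_eq_bot_iff_tup]
      exact exists_congr fun d => by
        rw [bot_eq_tBot, bot_eq_f]; exact (ih _).2
  | ex x A ih =>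
    constructor <;> simp only [fevalT, feval3]
    · rw [← top_eq_tTop, ← top_eq_t, iSup_eq_top_iff_fin, iSup_eq_top_iff_tup]
      exact exists_congr fun d => by
        rw [top_eq_tTop, top_eq_t]; exact (ih _).1
    · rw [← bot_eq_tBot, ← bot_eq_f, iSup_eq_bot, iSup_eq_bot]
      exact forall_congr' fun d => by
        rw [bot_eq_tBot, bot_eq_f]; exact (ih _).2
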